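/- For every alternating group A_m with m ≥ 5, there exist subgroups H₂ ≤ H₁ ≤ A_m with |H₂|² ≤ |A_m|, [A_m : H₁]² ≤ |A_m|, and [H₁ : H₂]² ≤ |A_m|. -/

import Mathlib

open Equiv Equiv.Perm Nat

namespace Stmt8Aux

/-- injectivity of `ofSubtype`. -/
theorem ofSubtype_inj {α : Type*} [DecidableEq α] {p : α → Prop} [DecidablePred p] :
    Function.Injective (Equiv.Perm.ofSubtype : Perm (Subtype p) →* Perm α) := by
  intro f g h
  ext x
  have := congr_arg (fun u : Perm α => u (x : α)) h
  simpa [Equiv.Perm.ofSubtype_apply_coe, Subtype.ext_iff] using this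

variable (m b : ℕ)

/-- The embedding of the alternating group on `{x : Fin m // x < b}` into `A_m`. -/
noncomputable def emb :
    alternatingGroup {x : Fin m // (x : ℕ) < b} →* alternatingGroup (Fin m) :=
  MonoidHom.codRestrict
    ((Equiv.Perm.ofSubtype : Perm {x : Fin m // (x : ℕ) < b} →* Perm (Fin m)).comp
      (alternatingGroup {x : Fin m // (x : ℕ) < b}).subtype)
    (alternatingGroup (Fin m))
    (fun g => by
      simp only [MonoidHom.comp_apply, Subgroup.coe_subtype, Equiv.Perm.mem_alternatingGroup,
        Equiv.Perm.sign_ofSubtype]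
      exact g.2)

/-- copy of `A_b` inside `A_m`, as permutations supported on `{x < b}`. -/
noncomputable def H : Subgroup (alternatingGroup (Fin m)) := (emb m b).range

theorem emb_inj : Function.Injective (emb m b) := by
  intro f g h
  have : Equiv.Perm.ofSubtype (f : Perm {x : Fin m // (x : ℕ) < b}) =
      Equiv.Perm.ofSubtype (g : Perm {x : Fin m // (x : ℕ) < b}) := by
    exact congr_arg Subtype.val h
  exact Subtype.ext (ofSubtype_inj this)

theorem coe_emb (g : alternatingGroup {x : Fin m // (x : ℕ) < b}) :
    ((emb m b g : alternatingGroup (Fin m)) : Perm (Fin m)) =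
      Equiv.Perm.ofSubtype (g : Perm {x : Fin m // (x : ℕ) < b}) := rfl

theorem H_mono {b' : ℕ} (hbb : b ≤ b') : H m b ≤ H m b' := by
  rintro x ⟨g, rfl⟩
  set u : Perm (Fin m) := Equiv.Perm.ofSubtype (g : Perm {x : Fin m // (x : ℕ) < b}) with hu
  have hfix : ∀ a : Fin m, ¬ (a : ℕ) < b → u a = a := fun a ha =>
    Equiv.Perm.ofSubtype_apply_of_not_mem _ ha
  have h₁ : ∀ a : Fin m, ((a : ℕ) < b') ↔ ((u a : Fin m) : ℕ) < b' := by
    intro a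
    by_cases hpa : (a : ℕ) < b
    · have h2 : ((u a : Fin m) : ℕ) < b :=
        (Equiv.Perm.ofSubtype_apply_mem_iff_mem (g : Perm {x : Fin m // (x : ℕ) < b}) a).mpr hpa
      exact iff_of_true (lt_of_lt_of_le hpa hbb) (lt_of_lt_of_le h2 hbb)
    · rw [hfix a hpa]
  have h₂ : ∀ a : Fin m, u a ≠ a → (a : ℕ) < b' := by
    intro a ha
    by_contra hb'
    exact ha (hfix a (fun h => hb' (lt_of_lt_of_le h hbb)))
  set g' : Perm {x : Fin m // (x : ℕ) < b'} := Equiv.Perm.subtypePerm u (fun a => (h₁ a).symm) with hg'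
  have hout : Equiv.Perm.ofSubtype g' = u := Equiv.Perm.ofSubtype_subtypePerm (fun a => (h₁ a).symm) h₂
  have hsign : g' ∈ alternatingGroup {x : Fin m // (x : ℕ) < b'} := by
    rw [Equiv.Perm.mem_alternatingGroup]
    have : Equiv.Perm.sign (Equiv.Perm.ofSubtype g') = Equiv.Perm.sign g' :=
      Equiv.Perm.sign_ofSubtype g'
    rw [hout] at this
    rw [← this, hu, Equiv.Perm.sign_ofSubtype]
    exact g.2
  exact ⟨⟨g', hsign⟩, Subtype.ext (by rw [coe_emb]; exact hout)⟩

/-- The subtype `{x : Fin m // x < b}` has `b` elements when `b ≤ m`. -/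
theorem card_subtype (hbm : b ≤ m) :
    Fintype.card {x : Fin m // (x : ℕ) < b} = b := by
  have e : {x : Fin m // (x : ℕ) < b} ≃ Fin b :=
    { toFun := fun x => ⟨(x : Fin m), x.2⟩
      invFun := fun y => ⟨⟨(y : ℕ), lt_of_lt_of_le y.2 hbm⟩, y.2⟩
      left_inv := fun x => rfl
      right_inv := fun y => rfl }
  rw [Fintype.card_congr e, Fintype.card_fin]

theorem card_H (hb2 : 2 ≤ b) (hbm : b ≤ m) :
    2 * Nat.card (H m b) = b ! := by
  have hc : Fintype.card {x : Fin m // (x : ℕ) < b} = b := card_subtype m b hbm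
  haveI : Nontrivial {x : Fin m // (x : ℕ) < b} :=
    Fintype.one_lt_card_iff_nontrivial.mp (by omega)
  have h1 : Nat.card (H m b) = Nat.card (alternatingGroup {x : Fin m // (x : ℕ) < b}) :=
    (Nat.card_congr (MonoidHom.ofInjective (emb_inj m b)).toEquiv).symm
  rw [h1, Nat.card_eq_fintype_card, two_mul_card_alternatingGroup, Fintype.card_perm, hc]

theorem card_A (hm : 2 ≤ m) : 2 * Nat.card (alternatingGroup (Fin m)) = m ! := by
  haveI : Nontrivial (Fin m) :=
    Fintype.one_lt_card_iff_nontrivial.mp (by rw [Fintype.card_fin]; omega)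
  rw [Nat.card_eq_fintype_card, two_mul_card_alternatingGroup, Fintype.card_perm,
    Fintype.card_fin]

theorem two_mul_lt_factorial {n : ℕ} (h : 4 ≤ n) : 2 * (n + 1) < n ! := by
  induction n with
  | zero => omega
  | succ k ih =>
    rcases Nat.lt_or_ge k 4 with hk | hk
    · interval_cases k <;> first | omega | decide
    · have := ih hk
      rw [Nat.factorial_succ]
      nlinarith [Nat.factorial_pos k]

theorem two_mul_sq_le_factorial {n : ℕ} (h : 5 ≤ n) : 2 * n ^ 2 ≤ n ! := by
  induction n with
  | zero => omega
  | succ k ih =>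
    rcases Nat.lt_or_ge k 5 with hk | hk
    · interval_cases k <;> first | omega | decide
    · have := ih hk
      rw [Nat.factorial_succ]
      nlinarith [Nat.factorial_pos k]

end Stmt8Aux

set_option maxHeartbeats 1600000 in
theorem stmt_8 (m : ℕ) (hm : 5 ≤ m) :
    ∃ H₁ H₂ : Subgroup (alternatingGroup (Fin m)), H₂ ≤ H₁ ∧
      (Nat.card H₂) ^ 2 ≤ Nat.card (alternatingGroup (Fin m)) ∧
      H₁.index ^ 2 ≤ Nat.card (alternatingGroup (Fin m)) ∧
      (H₂.relIndex H₁) ^ 2 ≤ Nat.card (alternatingGroup (Fin m)) := by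
  classical
  -- choose b : the largest b ≤ m - 1 with (b!)² ≤ 2 * m!
  set P : ℕ → Prop := fun k => (k)! ^ 2 ≤ 2 * (m)! with hP
  have hP2 : P 2 := by
    have h24 : 24 ≤ (m)! := by
      calc (24 : ℕ) = (4)! := by decide
      _ ≤ (m)! := Nat.factorial_le (by omega)
    show ((2):ℕ)! ^ 2 ≤ 2 * (m)!
    have h2 : ((2):ℕ)! = 2 := rfl
    rw [h2]
    omega
  set b : ℕ := Nat.findGreatest P (m - 1) with hb
  have hb2 : 2 ≤ b := Nat.le_findGreatest (by omega) hP2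
  have hbm1 : b ≤ m - 1 := Nat.findGreatest_le _
  have hPb : (b)! ^ 2 ≤ 2 * (m)! := Nat.findGreatest_spec (by omega) hP2
  have hfac : 2 * m < (m - 1)! := by
    have := Stmt8Aux.two_mul_lt_factorial (n := m - 1) (by omega)
    have hm1 : m - 1 + 1 = m := by omega
    rwa [hm1] at this
  have hmfact : (m)! = m * (m - 1)! := by
    conv_lhs => rw [show m = (m - 1) + 1 by omega]
    rw [Nat.factorial_succ]
    congr 1
    omega
  have hnotPm1 : ¬ P (m - 1) := by
    simp only [hP, not_le]
    have h1 : 0 < (m - 1)! := Nat.factorial_pos _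
    calc 2 * (m)! = 2 * m * (m - 1)! := by rw [hmfact]; ring
    _ < (m - 1)! * (m - 1)! := mul_lt_mul_of_pos_right hfac h1
    _ = ((m - 1)!) ^ 2 := by ring
  have hbne : b ≠ m - 1 := fun h => hnotPm1 (h ▸ (Nat.findGreatest_spec (P := P) (by omega) hP2))
  have hblt : b + 1 ≤ m - 1 := by omega
  have hkey : 2 * (m)! < ((b + 1)!) ^ 2 := by
    have := Nat.findGreatest_is_greatest (P := P) (n := m - 1) (by omega) hblt
    simpa only [hP, not_le] using this
  -- cardinality facts
  have hle : Stmt8Aux.H m b ≤ Stmt8Aux.H m (m - 1) := Stmt8Aux.H_mono m b hbm1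
  have hN : 2 * Nat.card (alternatingGroup (Fin m)) = (m)! := Stmt8Aux.card_A m (by omega)
  have hn2 : 2 * Nat.card (Stmt8Aux.H m b) = (b)! := Stmt8Aux.card_H m b hb2 (by omega)
  have hn1 : 2 * Nat.card (Stmt8Aux.H m (m - 1)) = (m - 1)! :=
    Stmt8Aux.card_H m (m - 1) (by omega) (by omega)
  set N := Nat.card (alternatingGroup (Fin m)) with hNdef
  set n2 := Nat.card (Stmt8Aux.H m b) with hn2def
  set n1 := Nat.card (Stmt8Aux.H m (m - 1)) with hn1def
  have hNpos : 0 < N := by have := Nat.factorial_pos m; omega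
  have hn2pos : 0 < n2 := by have := Nat.factorial_pos b; omega
  have hn1pos : 0 < n1 := by have := Nat.factorial_pos (m - 1); omega
  -- goal 1
  have goal1 : n2 ^ 2 ≤ N := by nlinarith [hn2, hN, hPb]
  -- goal 2
  have hli : n1 * (Stmt8Aux.H m (m - 1)).index = N := Subgroup.card_mul_index _
  have hieq : (Stmt8Aux.H m (m - 1)).index = m := by
    have h2 : (m - 1)! * (Stmt8Aux.H m (m - 1)).index = (m - 1)! * m := by
      calc (m - 1)! * (Stmt8Aux.H m (m - 1)).index
          = 2 * n1 * (Stmt8Aux.H m (m - 1)).index := by rw [hn1]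
        _ = 2 * N := by rw [mul_assoc, hli]
        _ = (m)! := hN
        _ = (m - 1)! * m := by rw [hmfact]; ring
    exact Nat.eq_of_mul_eq_mul_left (Nat.factorial_pos (m - 1)) h2
  have goal2 : (Stmt8Aux.H m (m - 1)).index ^ 2 ≤ N := by
    rw [hieq]
    have := Stmt8Aux.two_mul_sq_le_factorial hm
    nlinarith [hN]
  -- goal 3
  have hsub : Nat.card ((Stmt8Aux.H m b).subgroupOf (Stmt8Aux.H m (m - 1))) = n2 :=
    Nat.card_congr (Subgroup.subgroupOfEquivOfLe hle).toEquiv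
  have hrel : n2 * (Stmt8Aux.H m b).relIndex (Stmt8Aux.H m (m - 1)) = n1 := by
    have := Subgroup.card_mul_index ((Stmt8Aux.H m b).subgroupOf (Stmt8Aux.H m (m - 1)))
    rwa [hsub] at this
  have hb1m : b + 1 ≤ m := by omega
  have hineq : 2 * ((m - 1)!) ^ 2 < (m)! * ((b)!) ^ 2 := by
    have e1 : (b + 1) ^ 2 * ((m)! * ((b)!) ^ 2) = (m)! * ((b + 1)!) ^ 2 := by
      rw [Nat.factorial_succ]; ring
    have e2 : (b + 1) ^ 2 * (2 * ((m - 1)!) ^ 2) ≤ (m)! * (2 * (m)!) := by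
      calc (b + 1) ^ 2 * (2 * ((m - 1)!) ^ 2)
          ≤ m ^ 2 * (2 * ((m - 1)!) ^ 2) :=
            Nat.mul_le_mul_right _ (Nat.pow_le_pow_left hb1m 2)
        _ = (m)! * (2 * (m)!) := by rw [hmfact]; ring
    have e3 : (m)! * (2 * (m)!) < (m)! * ((b + 1)!) ^ 2 :=
      mul_lt_mul_of_pos_left hkey (Nat.factorial_pos m)
    have h1 : (b + 1) ^ 2 * (2 * ((m - 1)!) ^ 2) < (b + 1) ^ 2 * ((m)! * ((b)!) ^ 2) := by
      rw [e1]; exact lt_of_le_of_lt e2 e3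
    exact lt_of_mul_lt_mul_left h1 (Nat.zero_le _)
  have goal3 : ((Stmt8Aux.H m b).relIndex (Stmt8Aux.H m (m - 1))) ^ 2 ≤ N := by
    set r := (Stmt8Aux.H m b).relIndex (Stmt8Aux.H m (m - 1)) with hrdef
    have h2 : n1 ^ 2 ≤ N * n2 ^ 2 := by
      have l1 : 2 * ((m - 1)!) ^ 2 = 8 * n1 ^ 2 := by rw [← hn1]; ring
      have l2 : (m)! * ((b)!) ^ 2 = 8 * (N * n2 ^ 2) := by rw [← hN, ← hn2]; ring
      rw [l1, l2] at hineq
      omega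
    have h4 : r ^ 2 * n2 ^ 2 ≤ N * n2 ^ 2 := by
      calc r ^ 2 * n2 ^ 2 = (n2 * r) ^ 2 := by ring
        _ = n1 ^ 2 := by rw [hrel]
        _ ≤ N * n2 ^ 2 := h2
    exact Nat.le_of_mul_le_mul_right h4 (by positivity)
  exact ⟨Stmt8Aux.H m (m - 1), Stmt8Aux.H m b, hle, goal1, goal2, goal3⟩
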